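/- Let l, r be real numbers with 2 < l < 3, 0 < r < 1/2 and (l−2)² + r² < 1. Then for all θ₀, φ₀, v, w ∈ ℝ with (v, w) ≠ (0, 0), there exists t ∈ ℝ such that NOT( |cos(θ₀ + t v) − cos(φ₀ + t w)| ≤ 2r and cos(θ₀ + t v) + cos(φ₀ + t w) ≤ 2l − 4 ). -/

import Mathlib

open Real

/-- If `cos x > 0` then `x/(2π)` is within `1/4` of its nearest integer. -/
lemma cos_pos_window (x : ℝ) (hx : 0 < Real.cos x) :
    |x / (2 * π) - round (x / (2 * π))| < 1 / 4 := by
  by_contra hcon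
  push_neg at hcon
  set n : ℤ := round (x / (2 * π)) with hn
  set u : ℝ := x / (2 * π) - n with hu
  have hpi : (0:ℝ) < π := Real.pi_pos
  have hx2 : x = 2 * π * u + n * (2 * π) := by
    have h2 : 2 * π * (x / (2 * π)) = x := by field_simp
    rw [hu]
    linear_combination (-1 : ℝ) * h2
  have hcos : Real.cos x = Real.cos (2 * π * u) := by
    rw [hx2, Real.cos_add_int_mul_two_pi]
  have hub : |u| ≤ 1 / 2 := by
    rw [hu, hn]
    exact abs_sub_round _
  have h1 : π / 2 ≤ 2 * π * |u| := by nlinarith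
  have h2 : 2 * π * |u| ≤ π + π / 2 := by nlinarith
  have : Real.cos (2 * π * |u|) ≤ 0 :=
    Real.cos_nonpos_of_pi_div_two_le_of_le h1 h2
  have habs : Real.cos (2 * π * u) = Real.cos (2 * π * |u|) := by
    rcases abs_cases u with ⟨h, _⟩ | ⟨h, _⟩
    · rw [h]
    · rw [h]
      rw [show 2 * π * -u = -(2 * π * u) by ring, Real.cos_neg]
  rw [hcos, habs] at hx
  linarith

/-- If `cos (a + k b) > 0` for every integer `k`, then `b` is an integer
multiple of `2π`. -/
lemma exists_int_of_forall_cos_pos (a b : ℝ)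
    (h : ∀ k : ℤ, 0 < Real.cos (a + k * b)) : ∃ m : ℤ, b = 2 * π * m := by
  have hpi : (0:ℝ) < π := Real.pi_pos
  set f : ℤ → ℝ := fun k => (a + k * b) / (2 * π) with hf
  set n : ℤ → ℤ := fun k => round (f k) with hnn
  set u : ℤ → ℝ := fun k => f k - n k with huu
  have hu : ∀ k, |u k| < 1 / 4 := fun k => cos_pos_window _ (h k)
  have hstep : ∀ k : ℤ, f (k + 1) - f k = b / (2 * π) := by
    intro k
    simp only [hf]
    push_cast
    field_simp
    ring
  have hd : ∀ k : ℤ, |b / (2 * π) - ((n (k+1) : ℝ) - n k)| < 1 / 2 := by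
    intro k
    have e1 : b / (2 * π) - ((n (k+1) : ℝ) - n k) = u (k+1) - u k := by
      simp only [huu]
      have := hstep k
      linarith
    rw [e1]
    calc |u (k+1) - u k| ≤ |u (k+1)| + |u k| := abs_sub _ _
      _ < 1 / 2 := by have := hu k; have := hu (k+1); linarith
  have hdeq : ∀ k : ℤ, n (k+1) - n k = n 1 - n 0 := by
    intro k
    have h1 := hd k
    have h2 := hd 0
    rw [show (0:ℤ) + 1 = 1 from rfl] at h2
    have h3 : |(((n (k+1) - n k) - (n 1 - n 0) : ℤ) : ℝ)| < 1 := by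
      push_cast
      rw [abs_lt] at h1 h2 ⊢
      constructor <;> [linarith [h1.1, h1.2, h2.1, h2.2]; linarith [h1.1, h1.2, h2.1, h2.2]]
    have h4 : |(n (k+1) - n k) - (n 1 - n 0)| < 1 := by exact_mod_cast h3
    rcases abs_lt.mp h4 with ⟨ha, hb⟩
    omega
  set e : ℝ := b / (2 * π) - ((n 1 : ℝ) - n 0) with he
  have hee : |e| < 1 / 2 := by
    have h0 := hd 0
    rw [show (0:ℤ) + 1 = 1 from rfl] at h0
    rw [he]
    exact h0
  have hrec : ∀ k : ℤ, u (k + 1) = u k + e := by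
    intro k
    have h1 : u (k+1) - u k = b / (2 * π) - ((n (k+1) : ℝ) - n k) := by
      simp only [huu]
      have := hstep k
      linarith
    have h2 := hdeq k
    have h3 : ((n (k+1) : ℝ) - n k) = ((n 1 : ℝ) - n 0) := by
      have h6 := congrArg (fun z : ℤ => (z : ℝ)) h2
      push_cast at h6
      linarith
    rw [h3] at h1
    rw [← he] at h1
    linarith
  have hlin : ∀ k : ℤ, u k = u 0 + k * e := by
    intro k
    induction k using Int.induction_on with
    | zero => simp
    | succ k ih =>
        rw [hrec k, ih]
        push_cast
        ring
    | pred k ih =>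
        have hr1 := hrec (-k - 1)
        rw [show (-(k:ℤ) - 1 + 1) = -k by ring] at hr1
        have h5 : u (-(k:ℤ) - 1) = u (-(k:ℤ)) - e := by linarith
        rw [h5, ih]
        push_cast
        ring
  clear_value e
  have he0 : e = 0 := by
    by_contra h'
    have hke : ∃ k : ℤ, (k : ℝ) * e ≥ 1 := by
      rcases lt_or_gt_of_ne h' with h1 | h1
      · refine ⟨-⌈1 / (-e)⌉, ?_⟩
        have hc : (⌈1 / (-e)⌉ : ℝ) ≥ 1 / (-e) := Int.le_ceil _
        have h2 : (0:ℝ) < -e := by linarith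
        have h6 : (⌈1 / (-e)⌉ : ℝ) * (-e) ≥ (1 / (-e)) * (-e) :=
          mul_le_mul_of_nonneg_right hc (le_of_lt h2)
        rw [div_mul_cancel₀ _ (by linarith : -e ≠ 0)] at h6
        push_cast
        nlinarith
      · refine ⟨⌈1 / e⌉, ?_⟩
        have hc : (⌈1 / e⌉ : ℝ) ≥ 1 / e := Int.le_ceil _
        have h6 : (⌈1 / e⌉ : ℝ) * e ≥ (1 / e) * e :=
          mul_le_mul_of_nonneg_right hc (le_of_lt h1)
        rwa [div_mul_cancel₀ _ (by linarith : e ≠ 0)] at h6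
    obtain ⟨k, hke⟩ := hke
    have h3 := hu k
    have h4 := hu 0
    rw [hlin k] at h3
    rw [abs_lt] at h3 h4
    linarith [h3.2, h4.1, hke]
  refine ⟨n 1 - n 0, ?_⟩
  have hb : b / (2 * π) = ((n 1 : ℝ) - n 0) := by rw [he] at he0; linarith
  have hb2 : b = ((n 1 : ℝ) - n 0) * (2 * π) := (div_eq_iff (by positivity : (2*π) ≠ 0)).mp hb
  push_cast
  linear_combination hb2

/-- The diagonal case: the line θ = θ₀ + s, φ = φ₀ + s cannot stay in D. -/
lemma diag_case (l r θ₀ φ₀ : ℝ) (hl : 2 < l) (hr : 0 < r)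
    (hlr : (l - 2) ^ 2 + r ^ 2 < 1)
    (h : ∀ s : ℝ, |Real.cos (θ₀ + s) - Real.cos (φ₀ + s)| ≤ 2 * r ∧
        Real.cos (θ₀ + s) + Real.cos (φ₀ + s) ≤ 2 * l - 4) : False := by
  set μ : ℝ := (θ₀ + φ₀) / 2 with hμ
  set δ : ℝ := (θ₀ - φ₀) / 2 with hδ
  -- step 1 : |sin δ| ≤ r
  have key1 := (h (π / 2 - μ)).1
  rw [Real.cos_sub_cos] at key1
  rw [show (θ₀ + (π / 2 - μ) + (φ₀ + (π / 2 - μ))) / 2 = π / 2 by rw [hμ]; ring] at key1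
  rw [show (θ₀ + (π / 2 - μ) - (φ₀ + (π / 2 - μ))) / 2 = δ by rw [hδ]; ring] at key1
  rw [Real.sin_pi_div_two] at key1
  have hsin : |Real.sin δ| ≤ r := by
    rw [abs_le] at key1 ⊢
    constructor <;> [nlinarith [key1.1, key1.2]; nlinarith [key1.1, key1.2]]
  -- step 2 : l - 2 < |cos δ|
  have hpyth := Real.sin_sq_add_cos_sq δ
  have hsq : Real.sin δ ^ 2 ≤ r ^ 2 := by
    rw [abs_le] at hsin
    nlinarith [hsin.1, hsin.2]
  have hcsq : (l - 2) ^ 2 < |Real.cos δ| ^ 2 := by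
    rw [sq_abs]
    nlinarith
  have hcos : l - 2 < |Real.cos δ| :=
    lt_of_pow_lt_pow_left₀ 2 (abs_nonneg _) hcsq
  -- step 3 : contradiction using the sum
  rcases le_or_gt (Real.cos δ) 0 with hc | hc
  · -- cos δ ≤ 0, so cos δ < -(l-2); take s = π - μ
    have habs : |Real.cos δ| = -Real.cos δ := abs_of_nonpos hc
    have key2 := (h (π - μ)).2
    rw [Real.cos_add_cos] at key2
    rw [show (θ₀ + (π - μ) + (φ₀ + (π - μ))) / 2 = π by rw [hμ]; ring] at key2
    rw [show (θ₀ + (π - μ) - (φ₀ + (π - μ))) / 2 = δ by rw [hδ]; ring] at key2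
    rw [Real.cos_pi] at key2
    rw [habs] at hcos
    nlinarith
  · -- cos δ > 0; take s = -μ
    have habs : |Real.cos δ| = Real.cos δ := abs_of_pos hc
    have key2 := (h (-μ)).2
    rw [Real.cos_add_cos] at key2
    rw [show (θ₀ + -μ + (φ₀ + -μ)) / 2 = 0 by rw [hμ]; ring] at key2
    rw [show (θ₀ + -μ - (φ₀ + -μ)) / 2 = δ by rw [hδ]; ring] at key2
    rw [Real.cos_zero] at key2
    rw [habs] at hcos
    nlinarith

theorem finite_horizon
    (l r : ℝ) (hl : 2 < l) (hl' : l < 3) (hr : 0 < r) (hr' : r < 1/2)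
    (hlr : (l - 2) ^ 2 + r ^ 2 < 1) :
    ∀ θ₀ φ₀ v w : ℝ, (v, w) ≠ (0, 0) →
      ∃ t : ℝ, ¬ (|cos (θ₀ + t * v) - cos (φ₀ + t * w)| ≤ 2 * r ∧
                  cos (θ₀ + t * v) + cos (φ₀ + t * w) ≤ 2 * l - 4) := by
  intro θ₀ φ₀ v w hvw
  have hpi : (0:ℝ) < π := Real.pi_pos
  by_contra hcon
  push_neg at hcon
  rcases eq_or_ne v 0 with hv | hv
  · -- v = 0, w ≠ 0
    have hw : w ≠ 0 := by
      intro hw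
      exact hvw (by rw [hv, hw])
    rcases le_or_gt (Real.cos θ₀) 0 with hc | hc
    · have := (hcon ((0 - φ₀) / w)).1
      rw [hv, mul_zero, add_zero] at this
      rw [show φ₀ + (0 - φ₀) / w * w = 0 by field_simp; ring] at this
      rw [Real.cos_zero, abs_le] at this
      linarith [this.1]
    · have := (hcon ((π - φ₀) / w)).1
      rw [hv, mul_zero, add_zero] at this
      rw [show φ₀ + (π - φ₀) / w * w = π by field_simp; ring] at this
      rw [Real.cos_pi, abs_le] at this
      linarith [this.2]
  rcases eq_or_ne w 0 with hw | hw
  · -- w = 0, v ≠ 0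
    rcases le_or_gt (Real.cos φ₀) 0 with hc | hc
    · have := (hcon ((0 - θ₀) / v)).1
      rw [hw, mul_zero, add_zero] at this
      rw [show θ₀ + (0 - θ₀) / v * v = 0 by field_simp; ring] at this
      rw [Real.cos_zero, abs_le] at this
      linarith [this.2]
    · have := (hcon ((π - θ₀) / v)).1
      rw [hw, mul_zero, add_zero] at this
      rw [show θ₀ + (π - θ₀) / v * v = π by field_simp; ring] at this
      rw [Real.cos_pi, abs_le] at this
      linarith [this.1]
  -- v ≠ 0 and w ≠ 0
  have h2r : 2 * r < 1 := by linarith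
  -- at times when cos θ = 1, cos φ > 0
  have hA : ∀ k : ℤ, 0 < Real.cos ((φ₀ - θ₀ * w / v) + k * (2 * π * (w / v))) := by
    intro k
    have ht := hcon ((2 * π * k - θ₀) / v)
    have e1 : θ₀ + (2 * π * k - θ₀) / v * v = (k : ℝ) * (2 * π) := by
      field_simp
      ring
    have e2 : φ₀ + (2 * π * k - θ₀) / v * w = (φ₀ - θ₀ * w / v) + k * (2 * π * (w / v)) := by
      field_simp
      ring
    rw [e1, e2, Real.cos_int_mul_two_pi] at ht
    have h1 := ht.1
    rw [abs_le] at h1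
    linarith [h1.2]
  have hB : ∀ k : ℤ, 0 < Real.cos ((θ₀ - φ₀ * v / w) + k * (2 * π * (v / w))) := by
    intro k
    have ht := hcon ((2 * π * k - φ₀) / w)
    have e1 : φ₀ + (2 * π * k - φ₀) / w * w = (k : ℝ) * (2 * π) := by
      field_simp
      ring
    have e2 : θ₀ + (2 * π * k - φ₀) / w * v = (θ₀ - φ₀ * v / w) + k * (2 * π * (v / w)) := by
      field_simp
      ring
    rw [e1, e2, Real.cos_int_mul_two_pi] at ht
    have h1 := ht.1
    rw [abs_le] at h1
    linarith [h1.1]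
  obtain ⟨m, hm⟩ := exists_int_of_forall_cos_pos _ _ hA
  obtain ⟨m', hm'⟩ := exists_int_of_forall_cos_pos _ _ hB
  have hwv : w = m * v := by
    have : 2 * π * (w / v) = 2 * π * m := hm
    have h2 : w / v = m := by
      have hπ : (2 * π) ≠ 0 := by positivity
      exact mul_left_cancel₀ hπ this
    field_simp at h2
    linarith
  have hvw' : v = m' * w := by
    have : 2 * π * (v / w) = 2 * π * m' := hm'
    have h2 : v / w = m' := by
      have hπ : (2 * π) ≠ 0 := by positivity
      exact mul_left_cancel₀ hπ this
    field_simp at h2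
    linarith
  have hmm : m * m' = 1 := by
    have : v = (m' : ℝ) * ((m : ℝ) * v) := by rw [← hwv]; exact hvw'
    have h2 : ((m * m' : ℤ) : ℝ) = 1 := by
      push_cast
      have h3 : v * (1 - (m' : ℝ) * m) = 0 := by linarith [this]; 
      rcases mul_eq_zero.mp h3 with h4 | h4
      · exact absurd h4 hv
      · nlinarith
    exact_mod_cast h2
  rcases Int.mul_eq_one_iff_eq_one_or_neg_one.mp hmm with ⟨hm1, _⟩ | ⟨hm1, _⟩
  · -- m = 1 : w = v
    have hweq : w = v := by rw [hwv, hm1]; push_cast; ring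
    apply diag_case l r θ₀ φ₀ hl hr hlr
    intro s
    have := hcon (s / v)
    rw [show θ₀ + s / v * v = θ₀ + s by field_simp] at this
    rw [hweq, show φ₀ + s / v * v = φ₀ + s by field_simp] at this
    exact this
  · -- m = -1 : w = -v
    have hweq : w = -v := by rw [hwv, hm1]; push_cast; ring
    apply diag_case l r θ₀ (-φ₀) hl hr hlr
    intro s
    have := hcon (s / v)
    rw [show θ₀ + s / v * v = θ₀ + s by field_simp] at this
    rw [hweq, show φ₀ + s / v * -v = -(-φ₀ + s) by field_simp; ring] at this
    rw [Real.cos_neg] at this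
    exact this
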